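/- Let Ω' ⊆ ℝ² be a compact convex set with nonempty interior (a polygon), and let F₁, F₂, F₃ be closed sets covering the boundary of Ω' such that F₁ ∩ F₃ = ∅. Then Ω' ⊆ conv(F₁) ∪ conv(F₂) ∪ conv(F₃). -/

import Mathlib

open Set Bornology Metric

private noncomputable abbrev E2 := EuclideanSpace ℝ (Fin 2)

/-- Convex hull of a compact set in the plane is compact (Carathéodory). -/
private lemma isCompact_convexHull_plane {K : Set E2} (hK : IsCompact K) :
    IsCompact (convexHull ℝ K) := by
  classical
  rcases K.eq_empty_or_nonempty with rfl | ⟨k₀, hk₀⟩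
  · simpa using isCompact_empty
  · set φ : (Fin 3 → E2) × (Fin 3 → ℝ) → E2 := fun pw => ∑ i, pw.2 i • pw.1 i with hφ
    have hφc : Continuous φ := by
      apply continuous_finset_sum
      intro i _
      exact ((continuous_apply i).comp continuous_snd).smul
        ((continuous_apply i).comp continuous_fst)
    have hdom : IsCompact ((Set.univ.pi fun _ : Fin 3 => K) ×ˢ stdSimplex ℝ (Fin 3)) :=
      (isCompact_univ_pi fun _ => hK).prod (isCompact_stdSimplex _ _)
    have himg : convexHull ℝ K =
        φ '' ((Set.univ.pi fun _ : Fin 3 => K) ×ˢ stdSimplex ℝ (Fin 3)) := by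
      apply Set.Subset.antisymm
      · intro x hx
        rw [convexHull_eq_union] at hx
        simp only [Set.mem_iUnion] at hx
        obtain ⟨t, hts, hai, hxt⟩ := hx
        rw [Finset.convexHull_eq] at hxt
        obtain ⟨w, hw0, hw1, hwx⟩ := hxt
        rw [Finset.centerMass_eq_of_sum_1 _ _ hw1] at hwx
        have hcard : Fintype.card ↥t ≤ Fintype.card (Fin 3) := by
          have h1 := hai.card_le_finrank_succ
          have h2 : Module.finrank ℝ ↥(vectorSpan ℝ (Set.range (Subtype.val : ↥t → E2))) ≤ 2 := by
            have := Submodule.finrank_le (vectorSpan ℝ (Set.range (Subtype.val : ↥t → E2)))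
            simpa [finrank_euclideanSpace_fin] using this
          simp only [Fintype.card_fin]
          omega
        obtain ⟨e⟩ := Function.Embedding.nonempty_iff_card_le.2 hcard
        have key : ∀ {β : Type} (_ : AddCommMonoid β) (F : ↥t → β),
            (∑ i : Fin 3, if h : ∃ j : ↥t, e j = i then F h.choose else 0) = ∑ j : ↥t, F j := by
          intro β _ F
          have h1 : (∑ i : Fin 3, if h : ∃ j : ↥t, e j = i then F h.choose else 0)
              = ∑ i ∈ Finset.univ.map e, (if h : ∃ j : ↥t, e j = i then F h.choose else 0) := by
            refine (Finset.sum_subset (Finset.subset_univ _) ?_).symm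
            intro i _ hi
            rw [dif_neg]
            rintro ⟨j, hj⟩
            exact hi (Finset.mem_map.2 ⟨j, Finset.mem_univ _, hj⟩)
          rw [h1, Finset.sum_map]
          apply Finset.sum_congr rfl
          intro j _
          have hex : ∃ j' : ↥t, e j' = (e : ↥t → Fin 3) j := ⟨j, rfl⟩
          rw [dif_pos hex]
          congr 1
          exact e.injective hex.choose_spec
        set g : Fin 3 → E2 := fun i =>
          if h : ∃ j : ↥t, e j = i then ((h.choose : E2)) else k₀ with hg
        set w' : Fin 3 → ℝ := fun i =>
          if h : ∃ j : ↥t, e j = i then w h.choose else 0 with hw'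
        refine ⟨(g, w'), ⟨?_, ?_, ?_⟩, ?_⟩
        · -- g i ∈ K
          intro i _
          show g i ∈ K
          simp only [hg]
          split
          · exact hts (Subtype.coe_prop _)
          · exact hk₀
        · -- nonneg
          intro i
          show 0 ≤ w' i
          simp only [hw']
          split
          · exact hw0 _ (Subtype.coe_prop _)
          · exact le_refl 0
        · -- sum = 1
          show ∑ i : Fin 3, w' i = 1
          have hk := key inferInstance (fun j : ↥t => w (j : E2))
          rw [Finset.sum_coe_sort t w, hw1] at hk
          rw [← hk]
        · -- the combination equals x
          show ∑ i : Fin 3, w' i • g i = x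
          have hpt : ∀ i : Fin 3, w' i • g i
              = (if h : ∃ j : ↥t, e j = i then (fun j : ↥t => w (j : E2) • (j : E2)) h.choose
                 else 0) := by
            intro i
            simp only [hw', hg]
            split
            · rfl
            · rw [zero_smul]
          have hk := key inferInstance (fun j : ↥t => w (j : E2) • (j : E2))
          rw [Finset.sum_coe_sort t (fun y => w y • y)] at hk
          calc (∑ i : Fin 3, w' i • g i)
              = ∑ i : Fin 3, (if h : ∃ j : ↥t, e j = i
                  then (fun j : ↥t => w (j : E2) • (j : E2)) h.choose else 0) :=
                Finset.sum_congr rfl fun i _ => hpt i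
            _ = ∑ y ∈ t, w y • y := hk
            _ = x := by simpa using hwx
      · rintro x ⟨⟨p, wt⟩, hmem, rfl⟩
        obtain ⟨hp, hwt⟩ := hmem
        exact (convex_convexHull ℝ K).sum_mem (fun i _ => hwt.1 i)
          hwt.2 (fun i _ => subset_convexHull ℝ K (hp i (Set.mem_univ i)))
    rw [himg]
    exact hdom.image hφc

/-- In the plane, for any two functionals there is a nonzero common "recession" direction. -/
private lemma exists_recession (f g : E2 →L[ℝ] ℝ) :
    ∃ v : E2, v ≠ 0 ∧ f v ≤ 0 ∧ g v ≤ 0 := by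
  have hker : ∀ (h : E2 →L[ℝ] ℝ), ∃ v : E2, v ≠ 0 ∧ h v = 0 := by
    intro h
    have : LinearMap.ker (h : E2 →ₗ[ℝ] ℝ) ≠ ⊥ := by
      intro hbot
      have hinj : Function.Injective (h : E2 →ₗ[ℝ] ℝ) := LinearMap.ker_eq_bot.1 hbot
      have := LinearMap.finrank_le_finrank_of_injective hinj
      simp [finrank_euclideanSpace_fin] at this
    obtain ⟨v, hv, hv0⟩ := Submodule.exists_mem_ne_zero_of_ne_bot this
    exact ⟨v, hv0, hv⟩
  obtain ⟨v, hv0, hfv⟩ := hker f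
  rcases le_or_gt (g v) 0 with hg | hg
  · exact ⟨v, hv0, le_of_eq hfv, hg⟩
  · exact ⟨-v, neg_ne_zero.2 hv0, by simp [hfv], by simp; linarith⟩

/-- The "cap" of the frontier of a convex compact set cut off by a hyperplane,
on the far side from an interior point, is preconnected. -/
private lemma cap_preconnected {A : Set E2} (hcomp : IsCompact A) (hconv : Convex ℝ A)
    {c : E2} (hc : c ∈ interior A) (f : E2 →L[ℝ] ℝ) (u : ℝ) (hcu : u < f c) :
    IsPreconnected (frontier A ∩ {p | f p ≤ u}) := by
  set h : E2 ≃ₜ E2 := Homeomorph.addLeft (-c) with hh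
  have hcoe : ∀ p : E2, h p = p - c := fun p => by
    simp [hh, neg_add_eq_sub]
  set D : Set E2 := h '' A with hD
  have hDconv : Convex ℝ D := by
    have h' := hconv.translate (-c)
    have heq : D = (fun x => -c + x) '' A := rfl
    rwa [heq]
  have hmemD : ∀ p : E2, p ∈ A ↔ p - c ∈ D := by
    intro p
    constructor
    · intro hp; exact ⟨p, hp, hcoe p⟩
    · rintro ⟨q, hq, hq'⟩
      rw [hcoe q] at hq'
      rwa [← sub_left_inj.1 hq']
  have hfrD : ∀ q : E2, q ∈ frontier A ↔ q - c ∈ frontier D := by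
    intro q
    rw [hD, ← h.image_frontier]
    constructor
    · intro hq; exact ⟨q, hq, hcoe q⟩
    · rintro ⟨p, hp, hp'⟩
      rw [hcoe p] at hp'
      rwa [← sub_left_inj.1 hp']
  have h0D : (0 : E2) ∈ interior D := by
    rw [hD, ← h.image_interior]
    exact ⟨c, hc, by rw [hcoe c]; exact sub_self c⟩
  have hnhds : D ∈ nhds (0 : E2) := mem_interior_iff_mem_nhds.1 h0D
  have hDcomp : IsCompact D := hcomp.image h.continuous
  have hvb : Bornology.IsVonNBounded ℝ D := (NormedSpace.isVonNBounded_iff ℝ).2 hDcomp.isBounded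
  have habs : Absorbent ℝ D := absorbent_nhds_zero hnhds
  have gpos : ∀ y : E2, y ≠ 0 → 0 < gauge D y := fun y hy => (gauge_pos habs hvb).2 hy
  set G : E2 → E2 := fun p => c + (gauge D (p - c))⁻¹ • (p - c) with hG
  set Adom : Set E2 := A ∩ {p | f p ≤ u} with hAdom
  have hpc : ∀ p ∈ Adom, p - c ≠ 0 := by
    rintro p ⟨hpA, hpu⟩
    refine sub_ne_zero.2 ?_
    rintro rfl
    exact absurd hpu (not_le.2 hcu)
  have himg : frontier A ∩ {p | f p ≤ u} = G '' Adom := by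
    apply Set.Subset.antisymm
    · rintro q ⟨hqf, hqu⟩
      have hqA : q ∈ A := hcomp.isClosed.frontier_subset hqf
      refine ⟨q, ⟨hqA, hqu⟩, ?_⟩
      have : gauge D (q - c) = 1 :=
        (gauge_eq_one_iff_mem_frontier hDconv hnhds).2 ((hfrD q).1 hqf)
      simp [hG, this]
    · rintro _ ⟨p, hp, rfl⟩
      have hy0 : p - c ≠ 0 := hpc p hp
      set γ : ℝ := gauge D (p - c) with hγ
      have hγpos : 0 < γ := gpos _ hy0
      have hγle : γ ≤ 1 := gauge_le_one_of_mem ((hmemD p).1 hp.1)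
      have hγinv : 1 ≤ γ⁻¹ := by
        have hmc : γ⁻¹ * γ = 1 := inv_mul_cancel₀ hγpos.ne'
        nlinarith [inv_nonneg.2 hγpos.le]
      have hgone : gauge D (γ⁻¹ • (p - c)) = 1 := by
        rw [gauge_smul_of_nonneg (inv_nonneg.2 hγpos.le), ← hγ, smul_eq_mul,
          inv_mul_cancel₀ hγpos.ne']
      constructor
      · rw [hfrD]
        have : G p - c = γ⁻¹ • (p - c) := by simp [hG, hγ]
        rw [this]
        exact (gauge_eq_one_iff_mem_frontier hDconv hnhds).1 hgone
      · show f (G p) ≤ u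
        have hval : f (G p) = f c + γ⁻¹ * (f p - f c) := by
          simp [hG, hγ, map_add, map_smul, map_sub, smul_eq_mul]
        have hneg : f p - f c ≤ 0 := by
          have := hp.2
          simp only [Set.mem_setOf_eq] at this
          linarith
        have : γ⁻¹ * (f p - f c) ≤ 1 * (f p - f c) :=
          mul_le_mul_of_nonpos_right hγinv hneg
        have hpu : f p ≤ u := hp.2
        rw [hval]
        linarith
  rw [himg]
  have hAconv : Convex ℝ Adom := by
    refine hconv.inter ?_
    exact convex_halfSpace_le (f.toLinearMap.isLinear) u
  refine hAconv.isPreconnected.image G ?_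
  have hgc : Continuous fun p : E2 => gauge D (p - c) :=
    (continuous_gauge hDconv hnhds).comp (continuous_id.sub continuous_const)
  refine continuousOn_const.add (ContinuousOn.fun_smul ?_ (continuous_id.sub continuous_const).continuousOn)
  exact hgc.continuousOn.inv₀ fun p hp => (gpos _ (hpc p hp)).ne'

/-- Key contradiction: an intersection of two open halfplanes containing an interior
point of a compact set and avoiding its frontier is impossible. -/
private lemma ray_contra {A : Set E2} (hcomp : IsCompact A) {x : E2}
    (hxint : x ∈ interior A) (g f : E2 →L[ℝ] ℝ) (ug uf : ℝ)
    (hgx : g x < ug) (hfx : f x < uf)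
    (hempty : ∀ p ∈ frontier A, ¬(g p < ug ∧ f p < uf)) : False := by
  set C : Set E2 := {p | g p < ug} ∩ {p | f p < uf} with hC
  have hCconv : Convex ℝ C :=
    (convex_halfSpace_lt (g.toLinearMap.isLinear) ug).inter
      (convex_halfSpace_lt (f.toLinearMap.isLinear) uf)
  have hCx : x ∈ C := ⟨hgx, hfx⟩
  have hCsub : C ⊆ interior A ∪ (closure A)ᶜ := by
    intro p hp
    by_cases hpc : p ∈ closure A
    · rw [closure_eq_interior_union_frontier] at hpc
      rcases hpc with hh | hh
      · exact Or.inl hh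
      · exact absurd ⟨hp.1, hp.2⟩ (hempty p hh)
    · exact Or.inr hpc
  have hdisj : Disjoint (interior A) (closure A)ᶜ :=
    disjoint_compl_right.mono_left interior_subset_closure
  rcases hCconv.isPreconnected.subset_or_subset isOpen_interior
      isClosed_closure.isOpen_compl hdisj hCsub with hCi | hCc
  · obtain ⟨R, hR⟩ := hcomp.isBounded.exists_norm_le
    obtain ⟨v, hv0, hgv, hfv⟩ := exists_recession g f
    have hvn : 0 < ‖v‖ := norm_pos_iff.2 hv0
    have hRx : ‖x‖ ≤ R := hR x (interior_subset hxint)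
    set t : ℝ := (R + ‖x‖ + 1) / ‖v‖ with ht
    have ht0 : 0 ≤ t := div_nonneg (by linarith [norm_nonneg x]) hvn.le
    have hmem : x + t • v ∈ C := by
      constructor
      · show g (x + t • v) < ug
        have : g (x + t • v) = g x + t * g v := by
          simp [map_add, map_smul, smul_eq_mul]
        nlinarith [mul_nonneg ht0 (neg_nonneg.2 hgv)]
      · show f (x + t • v) < uf
        have : f (x + t • v) = f x + t * f v := by
          simp [map_add, map_smul, smul_eq_mul]
        nlinarith [mul_nonneg ht0 (neg_nonneg.2 hfv)]
    have hle : ‖x + t • v‖ ≤ R := hR _ (interior_subset (hCi hmem))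
    have htv : ‖t • v‖ = R + ‖x‖ + 1 := by
      rw [norm_smul, Real.norm_eq_abs, abs_of_nonneg ht0, ht,
        div_mul_cancel₀ _ hvn.ne']
    have : ‖t • v‖ ≤ ‖x + t • v‖ + ‖x‖ := by
      calc ‖t • v‖ = ‖(x + t • v) - x‖ := by rw [add_sub_cancel_left]
        _ ≤ ‖x + t • v‖ + ‖x‖ := norm_sub_le _ _
    linarith
  · exact (hCc hCx) (subset_closure (interior_subset hxint))

theorem polygon_cover_three_closed_sets_disjoint_pair
    (Ω' : Set (EuclideanSpace ℝ (Fin 2)))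
    (hcomp : IsCompact Ω') (hconv : Convex ℝ Ω')
    (hint : (interior Ω').Nonempty)
    (F₁ F₂ F₃ : Set (EuclideanSpace ℝ (Fin 2)))
    (h1 : IsClosed F₁) (h2 : IsClosed F₂) (h3 : IsClosed F₃)
    (hcover : frontier Ω' ⊆ F₁ ∪ F₂ ∪ F₃)
    (hdisj : F₁ ∩ F₃ = ∅) :
    Ω' ⊆ convexHull ℝ F₁ ∪ convexHull ℝ F₂ ∪ convexHull ℝ F₃ := by
  intro x hx
  by_contra hxmem
  simp only [Set.mem_union, not_or] at hxmem
  obtain ⟨⟨hx1, hx2⟩, hx3⟩ := hxmem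
  have hclosed : IsClosed Ω' := hcomp.isClosed
  have hSsub : frontier Ω' ⊆ Ω' := hclosed.frontier_subset
  have hScomp : IsCompact (frontier Ω') := hcomp.of_isClosed_subset isClosed_frontier hSsub
  have hxS : x ∉ frontier Ω' := by
    intro hxS
    rcases hcover hxS with (hm | hm) | hm
    exacts [hx1 (subset_convexHull ℝ F₁ hm), hx2 (subset_convexHull ℝ F₂ hm),
      hx3 (subset_convexHull ℝ F₃ hm)]
  have hxint : x ∈ interior Ω' := by
    have hcx : x ∈ closure Ω' := subset_closure hx
    rw [closure_eq_interior_union_frontier] at hcx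
    rcases hcx with hh | hh
    · exact hh
    · exact absurd hh hxS
  -- separation of x from each piece of the boundary
  have sep : ∀ (F : Set (EuclideanSpace ℝ (Fin 2))), IsClosed F → x ∉ convexHull ℝ F →
      ∃ (f : E2 →L[ℝ] ℝ) (u : ℝ), f x < u ∧ ∀ b ∈ F ∩ frontier Ω', u < f b := by
    intro F hF hxF
    have hFS : IsCompact (F ∩ frontier Ω') :=
      hScomp.of_isClosed_subset (hF.inter isClosed_frontier) Set.inter_subset_right
    have hxFS : x ∉ convexHull ℝ (F ∩ frontier Ω') := fun hmem =>
      hxF (convexHull_mono Set.inter_subset_left hmem)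
    obtain ⟨f, u, hfu, hb⟩ := geometric_hahn_banach_point_closed (convex_convexHull ℝ _)
      (isCompact_convexHull_plane hFS).isClosed hxFS
    exact ⟨f, u, hfu, fun b hbm => hb b (subset_convexHull ℝ _ hbm)⟩
  obtain ⟨f₁, u₁, hxu₁, hF1⟩ := sep F₁ h1 hx1
  obtain ⟨f₃, u₃, hxu₃, hF3⟩ := sep F₃ h3 hx3
  obtain ⟨f₂, u₂, c, hxu₂, hF2, hcint, hcu⟩ :
      ∃ (f₂ : E2 →L[ℝ] ℝ) (u₂ : ℝ) (c : E2), f₂ x < u₂ ∧ (∀ b ∈ F₂ ∩ frontier Ω', u₂ < f₂ b)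
        ∧ c ∈ interior Ω' ∧ u₂ < f₂ c := by
    obtain ⟨f, u, hfu, hb⟩ := sep F₂ h2 hx2
    rcases (F₂ ∩ frontier Ω').eq_empty_or_nonempty with he | ⟨b, hbm⟩
    · -- boundary misses F₂ entirely: pick an artificial functional
      obtain ⟨δ, hδ, hball⟩ := Metric.isOpen_iff.1 isOpen_interior x hxint
      set v₀ : E2 := EuclideanSpace.single (0 : Fin 2) (1 : ℝ) with hv₀
      set f' : E2 →L[ℝ] ℝ := EuclideanSpace.proj (0 : Fin 2) with hf'
      set cp : E2 := x + (δ / 2) • v₀ with hcp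
      have hcball : cp ∈ Metric.ball x δ := by
        rw [Metric.mem_ball, dist_eq_norm, hcp, add_sub_cancel_left, norm_smul,
          Real.norm_eq_abs, abs_of_pos (by linarith)]
        have : ‖v₀‖ = 1 := by
          rw [hv₀, EuclideanSpace.norm_single]
          norm_num
        rw [this]
        linarith
      have hfv₀ : f' v₀ = 1 := by
        simp [hf', hv₀, EuclideanSpace.single_apply]
      have hfc : f' cp = f' x + δ / 2 := by
        rw [hcp, map_add, map_smul, smul_eq_mul, hfv₀]
        ring
      refine ⟨f', f' x + δ / 4, cp, by linarith, ?_, hball hcball, by rw [hfc]; linarith⟩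
      intro b hbm
      rw [he] at hbm
      exact absurd hbm (Set.notMem_empty b)
    · -- pick an interior point close to a boundary point of F₂
      have hbu : u < f b := hb b hbm
      have hfd : 0 < f b - f x := by linarith
      have hbS : b ∈ closure Ω' := frontier_subset_closure hbm.2
      set ε : ℝ := min (1 / 2) ((f b - u) / (2 * (f b - f x))) with hε
      have hε0 : 0 < ε := lt_min (by norm_num) (div_pos (by linarith) (by linarith))
      have hεh : ε ≤ 1 / 2 := min_le_left _ _
      have hε1 : ε < 1 := by linarith
      have hεd : ε ≤ (f b - u) / (2 * (f b - f x)) := min_le_right _ _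
      have hkey : ε * (f b - f x) < f b - u := by
        rw [le_div_iff₀ (by positivity)] at hεd
        nlinarith
      set cpt : E2 := ε • x + (1 - ε) • b with hcpt
      have hcint : cpt ∈ interior Ω' :=
        hconv.openSegment_interior_closure_subset_interior hxint hbS
          ⟨ε, 1 - ε, hε0, by linarith, by ring, rfl⟩
      have hfcpt : f cpt = ε * f x + (1 - ε) * f b := by
        rw [hcpt]
        simp [map_add, map_smul, smul_eq_mul]
      refine ⟨f, u, cpt, hfu, hb, hcint, ?_⟩
      rw [hfcpt]
      nlinarith
  -- the cap of the boundary cut off by f₂ lies in F₁ ∪ F₃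
  have hKpre : IsPreconnected (frontier Ω' ∩ {p | f₂ p ≤ u₂}) :=
    cap_preconnected hcomp hconv hcint f₂ u₂ hcu
  obtain ⟨U, V, hU, hV, hFU, hFV, hUV⟩ :=
    normal_separation h1 h3 (Set.disjoint_iff_inter_eq_empty.2 hdisj)
  have hKsub : frontier Ω' ∩ {p | f₂ p ≤ u₂} ⊆ U ∪ V := by
    rintro p ⟨hpS, hpu⟩
    rcases hcover hpS with (hm | hm) | hm
    · exact Or.inl (hFU hm)
    · exact absurd (hF2 p ⟨hm, hpS⟩) (not_lt.2 hpu)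
    · exact Or.inr (hFV hm)
  rcases hKpre.subset_or_subset hU hV hUV hKsub with hKU | hKV
  · refine ray_contra hcomp hxint f₁ f₂ u₁ u₂ hxu₁ hxu₂ ?_
    rintro p hp ⟨hp1, hp2⟩
    have hpU : p ∈ U := hKU ⟨hp, hp2.le⟩
    rcases hcover hp with (hm | hm) | hm
    · exact absurd (hF1 p ⟨hm, hp⟩) (not_lt.2 hp1.le)
    · exact absurd (hF2 p ⟨hm, hp⟩) (not_lt.2 hp2.le)
    · exact Set.disjoint_left.1 hUV hpU (hFV hm)
  · refine ray_contra hcomp hxint f₃ f₂ u₃ u₂ hxu₃ hxu₂ ?_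
    rintro p hp ⟨hp1, hp2⟩
    have hpV : p ∈ V := hKV ⟨hp, hp2.le⟩
    rcases hcover hp with (hm | hm) | hm
    · exact Set.disjoint_left.1 hUV (hFU hm) hpV
    · exact absurd (hF2 p ⟨hm, hp⟩) (not_lt.2 hp2.le)
    · exact absurd (hF3 p ⟨hm, hp⟩) (not_lt.2 hp1.le)
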